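/- Let 0 ≤ α₁ ≤ α₂ ≤ 2π with α₂ − α₁ ≤ π, and let a = (cos α₁ + cos α₂)/2, b = (sin α₁ + sin α₂)/2. Then every pair (e, d) ∈ ℂ × ℝ satisfying d ≤ |e| and arg(e) ∈ [α₁, α₂] also satisfies the three linear inequalities: (i) sin(α₁) Re(e) − cos(α₁) Im(e) ≤ 0, (ii) sin(α₂) Re(e) − cos(α₂) Im(e) ≥ 0, (iii) a Re(e) + b Im(e) ≥ d (a² + b²). -/

import Mathlib

/-- The argument of a complex number taken in `[0, 2π)`. -/
noncomputable def argTwoPi (e : ℂ) : ℝ :=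
  if Complex.arg e < 0 then Complex.arg e + 2 * Real.pi else Complex.arg e

set_option maxHeartbeats 1000000 in
/-- Argument-cut relaxation: every `(e, d)` with `d ≤ |e|` and `arg e ∈ [α₁, α₂]`
satisfies the three affine inequalities of the convex envelope. -/
theorem stmt_3 (α₁ α₂ : ℝ) (h0 : 0 ≤ α₁) (h12 : α₁ ≤ α₂) (h2 : α₂ ≤ 2 * Real.pi)
    (hwidth : α₂ - α₁ ≤ Real.pi)
    (a b : ℝ) (ha : a = (Real.cos α₁ + Real.cos α₂) / 2)
    (hb : b = (Real.sin α₁ + Real.sin α₂) / 2)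
    (e : ℂ) (d : ℝ) (hd : d ≤ ‖e‖)
    (harg : argTwoPi e ∈ Set.Icc α₁ α₂) :
    Real.sin α₁ * e.re - Real.cos α₁ * e.im ≤ 0 ∧
    Real.sin α₂ * e.re - Real.cos α₂ * e.im ≥ 0 ∧
    a * e.re + b * e.im ≥ d * (a ^ 2 + b ^ 2) := by
  set r := ‖e‖ with hr
  set θ := argTwoPi e with hθ
  obtain ⟨hθ1, hθ2⟩ := harg
  have hr0 : 0 ≤ r := norm_nonneg e
  -- cos and sin of θ agree with those of arg e
  have hcos : Real.cos θ = Real.cos (Complex.arg e) := by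
    rw [hθ, argTwoPi]; split
    · rw [Real.cos_add_two_pi]
    · rfl
  have hsin : Real.sin θ = Real.sin (Complex.arg e) := by
    rw [hθ, argTwoPi]; split
    · rw [Real.sin_add_two_pi]
    · rfl
  have hre : e.re = r * Real.cos θ := by
    rw [hcos, hr]
    by_cases h : e = 0
    · simp [h]
    · rw [Complex.cos_arg h]
      field_simp [norm_ne_zero_iff.mpr h]
  have him : e.im = r * Real.sin θ := by
    rw [hsin, hr]
    by_cases h : e = 0
    · simp [h]
    · rw [Complex.sin_arg]
      field_simp [norm_ne_zero_iff.mpr h]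
  clear_value r θ
  have hpi : (0:ℝ) < Real.pi := Real.pi_pos
  -- (i)
  have hs1 : 0 ≤ Real.sin (θ - α₁) :=
    Real.sin_nonneg_of_nonneg_of_le_pi (by linarith) (by linarith)
  have hs2 : 0 ≤ Real.sin (α₂ - θ) :=
    Real.sin_nonneg_of_nonneg_of_le_pi (by linarith) (by linarith)
  have i1 : Real.sin α₁ * e.re - Real.cos α₁ * e.im ≤ 0 := by
    rw [hre, him]
    have : Real.sin α₁ * (r * Real.cos θ) - Real.cos α₁ * (r * Real.sin θ)
        = -(r * Real.sin (θ - α₁)) := by rw [Real.sin_sub]; ring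
    rw [this]
    nlinarith
  have i2 : Real.sin α₂ * e.re - Real.cos α₂ * e.im ≥ 0 := by
    rw [hre, him]
    have : Real.sin α₂ * (r * Real.cos θ) - Real.cos α₂ * (r * Real.sin θ)
        = r * Real.sin (α₂ - θ) := by rw [Real.sin_sub]; ring
    rw [this]
    positivity
  refine ⟨i1, i2, ?_⟩
  -- (iii)
  set m := (α₁ + α₂) / 2 with hm
  set h := (α₂ - α₁) / 2 with hh
  have hα1 : α₁ = m - h := by rw [hm, hh]; ring
  have hα2 : α₂ = m + h := by rw [hm, hh]; ring
  have ha' : a = Real.cos m * Real.cos h := by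
    rw [ha, hα1, hα2, Real.cos_sub, Real.cos_add]; ring
  have hb' : b = Real.sin m * Real.cos h := by
    rw [hb, hα1, hα2, Real.sin_sub, Real.sin_add]; ring
  clear_value m h
  have hh0 : 0 ≤ h := by rw [hh]; linarith
  have hhpi : h ≤ Real.pi := by rw [hh]; linarith
  have hcosh : 0 ≤ Real.cos h := by
    apply Real.cos_nonneg_of_mem_Icc
    constructor <;> [linarith; ·rw [hh]; linarith]
  have habs : |m - θ| ≤ h := by
    rw [abs_le, hm, hh]; constructor <;> linarith
  have hcosge : Real.cos h ≤ Real.cos (m - θ) := by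
    rw [← Real.cos_abs (m - θ)]
    exact Real.cos_le_cos_of_nonneg_of_le_pi (abs_nonneg _) hhpi habs
  have key : a * e.re + b * e.im = r * Real.cos h * Real.cos (m - θ) := by
    rw [hre, him, ha', hb', Real.cos_sub]; ring
  have key2 : a ^ 2 + b ^ 2 = Real.cos h ^ 2 := by
    rw [ha', hb']
    have := Real.sin_sq_add_cos_sq m
    nlinarith
  rw [ge_iff_le, key, key2]
  have t1 : 0 ≤ r * Real.cos h * (Real.cos (m - θ) - Real.cos h) :=
    mul_nonneg (mul_nonneg hr0 hcosh) (by linarith)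
  have t2 : 0 ≤ (r - d) * Real.cos h ^ 2 :=
    mul_nonneg (by linarith) (sq_nonneg _)
  linarith [t1, t2]
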